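/- For every locally connected connected graph G, evc(G) ∈ {mvc(G), mvc(G)+1}. -/

import Mathlib

namespace EVC

open SimpleGraph

variable {V : Type*}

/-- `S` is a vertex cover of `G`. -/
def IsVC (G : SimpleGraph V) (S : Set V) : Prop :=
  ∀ ⦃u v : V⦄, G.Adj u v → u ∈ S ∨ v ∈ S

/-- The minimum vertex cover number of `G`. -/
noncomputable def mvc (G : SimpleGraph V) : ℕ :=
  sInf {k | ∃ S : Set V, IsVC G S ∧ S.ncard = k}

/-- The minimum size of a vertex cover of `G` containing all vertices of `U`. -/
noncomputable def mvcOn (G : SimpleGraph V) (U : Set V) : ℕ :=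
  sInf {k | ∃ S : Set V, IsVC G S ∧ U ⊆ S ∧ S.ncard = k}

/-- Configuration `S'` is obtained from configuration `S` by a legal move of the guards
defending an attack on the edge `uv`: each guard stays or moves to an adjacent vertex
(at most one guard per vertex), and some guard moves across the attacked edge `uv`. -/
def Defends (G : SimpleGraph V) (S S' : Set V) (u v : V) : Prop :=
  ∃ f : V → V, Set.BijOn f S S' ∧ (∀ w ∈ S, f w = w ∨ G.Adj w (f w)) ∧
    ((u ∈ S ∧ f u = v) ∨ (v ∈ S ∧ f v = u))

/-- `C` is an eternal vertex cover class of `G` with `k` guards, each configuration being a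
vertex cover of size `k` containing `U`: from each configuration, every attack on an edge
can be defended by a legal move to another configuration in `C`. -/
def IsEvcClassOn (G : SimpleGraph V) (U : Set V) (k : ℕ) (C : Set (Set V)) : Prop :=
  C.Nonempty ∧ (∀ S ∈ C, IsVC G S ∧ U ⊆ S ∧ S.ncard = k) ∧
    ∀ S ∈ C, ∀ u v : V, G.Adj u v → ∃ S' ∈ C, Defends G S S' u v

/-- An eternal vertex cover class with no constraint on occupied vertices. -/
def IsEvcClass (G : SimpleGraph V) (k : ℕ) (C : Set (Set V)) : Prop :=
  IsEvcClassOn G ∅ k C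

/-- `evc_U(G)` : the minimum `k` admitting an eternal vertex cover class all of whose
configurations contain `U`. -/
noncomputable def evcOn (G : SimpleGraph V) (U : Set V) : ℕ :=
  sInf {k | ∃ C : Set (Set V), IsEvcClassOn G U k C}

/-- The eternal vertex cover number of `G`. -/
noncomputable def evc (G : SimpleGraph V) : ℕ := evcOn G ∅

/-- `x` is a cut vertex of the connected graph `G`. -/
def IsCutVertex (G : SimpleGraph V) (x : V) : Prop :=
  G.Connected ∧ ¬ (G.induce {v : V | v ≠ x}).Connected

/-- The set of cut vertices of `G`. -/
def cutVertices (G : SimpleGraph V) : Set V := {x | IsCutVertex G x}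

/-- `G` is locally connected: every open neighborhood induces a connected subgraph. -/
def LocallyConnected (G : SimpleGraph V) : Prop :=
  ∀ v : V, (G.induce (G.neighborSet v)).Connected

end EVC

open EVC SimpleGraph

section Aux

variable {V : Type*}

private lemma nbhd_subset {G : SimpleGraph V} {S : Set V} (hS : IsVC G S) {c : V} (hc : c ∉ S) :
    G.neighborSet c ⊆ S := by
  intro w hw
  rcases hS hw with h | h
  · exact absurd h hc
  · exact h

private lemma reach_in_induce {G : SimpleGraph V} (hlc : LocallyConnected G) {S : Set V}
    (hS : IsVC G S) :
    ∀ n : ℕ, ∀ {a b : V} (p : G.Walk a b), p.length ≤ n →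
      ∀ (ha : a ∈ S) (hb : b ∈ S), (G.induce S).Reachable ⟨a, ha⟩ ⟨b, hb⟩ := by
  intro n
  induction n with
  | zero =>
    intro a b p hp ha hb
    have : a = b := Walk.eq_of_length_eq_zero (Nat.le_zero.mp hp)
    subst this
    rfl
  | succ n ih =>
    intro a b p hp ha hb
    cases p with
    | nil => rfl
    | @cons _ c _ h q =>
      by_cases hc : c ∈ S
      · have h1 : (G.induce S).Adj ⟨a, ha⟩ ⟨c, hc⟩ := h
        exact (h1.reachable).trans (ih q (by simpa using Nat.le_of_succ_le_succ hp) hc hb)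
      · cases q with
        | nil => exact absurd hb hc
        | @cons _ d _ h2 r =>
          have hd : d ∈ S := by
            rcases hS h2 with h' | h'
            · exact absurd h' hc
            · exact h'
          have haN : a ∈ G.neighborSet c := h.symm
          have hdN : d ∈ G.neighborSet c := h2
          have hreach : (G.induce (G.neighborSet c)).Reachable ⟨a, haN⟩ ⟨d, hdN⟩ :=
            (hlc c).preconnected _ _
          have hsub : G.neighborSet c ⊆ S := nbhd_subset hS hc
          let f : G.induce (G.neighborSet c) →g G.induce S :=
            ⟨fun w => ⟨w.1, hsub w.2⟩, fun {x y} hxy => hxy⟩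
          have h3 : (G.induce S).Reachable ⟨a, ha⟩ ⟨d, hd⟩ := hreach.map f
          refine h3.trans (ih r ?_ hd hb)
          simp only [Walk.length_cons] at hp
          omega

private lemma vc_walk_in_S {G : SimpleGraph V} (hconn : G.Connected) (hlc : LocallyConnected G)
    {S : Set V} (hS : IsVC G S) {a b : V} (ha : a ∈ S) (hb : b ∈ S) :
    ∃ p : G.Walk a b, ∀ w ∈ p.support, w ∈ S := by
  obtain ⟨p⟩ := hconn.preconnected a b
  obtain ⟨q⟩ := reach_in_induce hlc hS p.length p le_rfl ha hb
  refine ⟨q.map (Embedding.induce S).toHom, ?_⟩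
  intro w hw
  have hw' : w ∈ (q.map (Embedding.induce S).toHom).support := hw
  rw [Walk.support_map, List.mem_map] at hw'
  obtain ⟨x, _, rfl⟩ := hw'
  exact x.2

open Classical in
private lemma shift {G : SimpleGraph V} {v u : V} :
    ∀ (n : ℕ) {x : V} (q : G.Walk x u) (T : Set V), q.length = n →
      q.IsPath → (∀ w ∈ q.support, w ∈ T) → v ∉ T → G.Adj u v →
      ∃ f : V → V, Set.BijOn f T ((T \ {x}) ∪ {v}) ∧
        (∀ w ∈ T, f w = w ∨ G.Adj w (f w)) ∧ f u = v := by
  intro n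
  induction n with
  | zero =>
    intro x q T hlen _ hsup hv hadj
    have hxu : x = u := Walk.eq_of_length_eq_zero hlen
    subst hxu
    have hu : x ∈ T := hsup x q.start_mem_support
    set f : V → V := fun w => if w = x then v else w with hf
    have fx : f x = v := by simp [hf]
    have fw : ∀ w, w ≠ x → f w = w := fun w hw => by simp [hf, hw]
    refine ⟨f, ⟨?_, ?_, ?_⟩, ?_, fx⟩
    · intro w hw
      by_cases hc : w = x
      · subst hc; rw [fx]; exact Or.inr rfl
      · rw [fw w hc]; exact Or.inl ⟨hw, hc⟩
    · intro w1 h1 w2 h2 he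
      by_cases e1 : w1 = x <;> by_cases e2 : w2 = x
      · rw [e1, e2]
      · rw [e1, fx, fw w2 e2] at he; exact absurd (he ▸ h2) hv
      · rw [e2, fx, fw w1 e1] at he; exact absurd (he.symm ▸ h1) hv
      · rwa [fw w1 e1, fw w2 e2] at he
    · intro b hb
      rcases hb with ⟨hbT, hbx⟩ | hbv
      · exact ⟨b, hbT, fw b hbx⟩
      · exact ⟨x, hu, by rw [fx]; exact hbv.symm⟩
    · intro w hw
      by_cases hc : w = x
      · subst hc; rw [fx]; exact Or.inr hadj
      · rw [fw w hc]; exact Or.inl rfl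
  | succ n ih =>
    intro x q T hlen hp hsup hv hadj
    cases q with
    | nil => simp at hlen
    | @cons _ x' _ h q' =>
      rw [Walk.cons_isPath_iff] at hp
      have hx : x ∈ T := hsup x (by simp)
      have hx' : x' ∈ T \ {x} := ⟨hsup x' (by simp), fun he => hp.2 (he ▸ q'.start_mem_support)⟩
      have hsup' : ∀ w ∈ q'.support, w ∈ T \ {x} := fun w hw =>
        ⟨hsup w (by simp [hw]), fun he => hp.2 (he ▸ hw)⟩
      have hv' : v ∉ T \ {x} := fun hc => hv hc.1
      obtain ⟨f', hbij, hmove, hfu⟩ := ih q' (T \ {x}) (by simpa using hlen) hp.1 hsup' hv' hadj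
      have hux : u ≠ x := fun he => hp.2 (he ▸ q'.end_mem_support)
      have himg : ((T \ {x}) \ {x'}) ∪ {v} ⊆ (T \ {x}) ∪ {v} := by
        rintro b (⟨h1, _⟩ | h1)
        · exact Or.inl h1
        · exact Or.inr h1
      set f : V → V := fun w => if w = x then x' else f' w with hf
      have fx : f x = x' := by simp [hf]
      have fw : ∀ w, w ≠ x → f w = f' w := fun w hw => by simp [hf, hw]
      refine ⟨f, ⟨?_, ?_, ?_⟩, ?_, by rw [fw u hux, hfu]⟩
      · intro w hw
        by_cases hc : w = x
        · subst hc; rw [fx]; exact Or.inl hx'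
        · rw [fw w hc]; exact himg (hbij.1 ⟨hw, hc⟩)
      · intro w1 h1 w2 h2 he
        by_cases e1 : w1 = x <;> by_cases e2 : w2 = x
        · rw [e1, e2]
        · exfalso
          rw [e1, fx, fw w2 e2] at he
          rcases hbij.1 ⟨h2, e2⟩ with ⟨_, hne⟩ | hvv
          · exact hne he.symm
          · rw [← he] at hvv
            exact hv (hvv ▸ hx'.1)
        · exfalso
          rw [e2, fx, fw w1 e1] at he
          rcases hbij.1 ⟨h1, e1⟩ with ⟨_, hne⟩ | hvv
          · exact hne he
          · rw [he] at hvv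
            exact hv (hvv ▸ hx'.1)
        · rw [fw w1 e1, fw w2 e2] at he
          exact hbij.2.1 ⟨h1, e1⟩ ⟨h2, e2⟩ he
      · intro b hb
        by_cases hbx' : b = x'
        · exact ⟨x, hx, by rw [fx, hbx']⟩
        · have hb' : b ∈ ((T \ {x}) \ {x'}) ∪ {v} := by
            rcases hb with ⟨h1, h2⟩ | h1
            · exact Or.inl ⟨⟨h1, h2⟩, hbx'⟩
            · exact Or.inr h1
          obtain ⟨w, hw, hfw⟩ := hbij.2.2 hb'
          exact ⟨w, hw.1, by rw [fw w hw.2, hfw]⟩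
      · intro w hw
        by_cases hc : w = x
        · subst hc; rw [fx]; exact Or.inr h
        · rw [fw w hc]
          exact hmove w ⟨hw, hc⟩

private lemma swap_defends {G : SimpleGraph V} {T : Set V} {u v : V}
    (hu : u ∈ T) (hv : v ∈ T) (hadj : G.Adj u v) : Defends G T T u v := by
  classical
  refine ⟨Equiv.swap u v, ⟨?_, (Equiv.swap u v).injective.injOn, ?_⟩, ?_, Or.inl ⟨hu, Equiv.swap_apply_left u v⟩⟩
  · intro w hw
    rcases eq_or_ne w u with rfl | h1
    · rwa [Equiv.swap_apply_left]
    rcases eq_or_ne w v with rfl | h2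
    · rwa [Equiv.swap_apply_right]
    · rwa [Equiv.swap_apply_of_ne_of_ne h1 h2]
  · intro b hb
    refine ⟨Equiv.swap u v b, ?_, Equiv.swap_apply_self u v b⟩
    rcases eq_or_ne b u with rfl | h1
    · rwa [Equiv.swap_apply_left]
    rcases eq_or_ne b v with rfl | h2
    · rwa [Equiv.swap_apply_right]
    · rwa [Equiv.swap_apply_of_ne_of_ne h1 h2]
  · intro w hw
    rcases eq_or_ne w u with rfl | h1
    · rw [Equiv.swap_apply_left]; exact Or.inr hadj
    rcases eq_or_ne w v with rfl | h2
    · rw [Equiv.swap_apply_right]; exact Or.inr hadj.symm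
    · rw [Equiv.swap_apply_of_ne_of_ne h1 h2]; exact Or.inl rfl

private lemma univ_class {G : SimpleGraph V} [Finite V] :
    IsEvcClassOn G ∅ (Nat.card V) {Set.univ} := by
  refine ⟨⟨Set.univ, rfl⟩, ?_, ?_⟩
  · rintro S rfl
    exact ⟨fun u v _ => Or.inl trivial, Set.empty_subset _, Set.ncard_univ V⟩
  · rintro S rfl u v hadj
    exact ⟨Set.univ, rfl, swap_defends trivial trivial hadj⟩

end Aux


/-- For a connected locally connected graph `G`,
`evc G ∈ {mvc G, mvc G + 1}`. -/
theorem evc_eq_mvc_or_mvc_succ_of_locally_connected {V : Type*} [Finite V]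
    (G : SimpleGraph V) (hconn : G.Connected) (hlc : LocallyConnected G) :
    evc G = mvc G ∨ evc G = mvc G + 1 := by
  classical
  have hVne : Nonempty V := hconn.nonempty
  by_cases hE : ∃ a b : V, G.Adj a b
  · -- there is at least one edge
    have hmvc_ne : {k | ∃ S : Set V, IsVC G S ∧ S.ncard = k}.Nonempty :=
      ⟨(Set.univ : Set V).ncard, Set.univ, fun u v _ => Or.inl trivial, rfl⟩
    obtain ⟨S, hSvc, hScard⟩ : mvc G ∈ {k | ∃ S : Set V, IsVC G S ∧ S.ncard = k} :=
      Nat.sInf_mem hmvc_ne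
    have hevc_ne : {k | ∃ C : Set (Set V), IsEvcClassOn G ∅ k C}.Nonempty :=
      ⟨Nat.card V, {Set.univ}, univ_class⟩
    obtain ⟨C, hC⟩ : evc G ∈ {k | ∃ C : Set (Set V), IsEvcClassOn G ∅ k C} :=
      Nat.sInf_mem hevc_ne
    have hlow : mvc G ≤ evc G := by
      obtain ⟨S0, hS0⟩ := hC.1
      obtain ⟨h1, _, h3⟩ := hC.2.1 S0 hS0
      exact Nat.sInf_le ⟨S0, h1, h3⟩
    by_cases hSuniv : S = Set.univ
    · -- minimum vertex cover is everything
      left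
      have h1 : evc G ≤ mvc G := by
        have : evc G ≤ Nat.card V := Nat.sInf_le ⟨{Set.univ}, univ_class⟩
        rwa [← hScard, hSuniv, Set.ncard_univ]
      omega
    · -- there is a vertex outside S
      obtain ⟨x₀, hx₀⟩ : ∃ x, x ∉ S := by
        by_contra hcon
        push_neg at hcon
        exact hSuniv (Set.eq_univ_of_forall hcon)
      -- the eternal class: S plus one extra guard outside S
      set C' : Set (Set V) := {T | ∃ y, y ∉ S ∧ T = insert y S} with hC'
      have hmem : ∀ T ∈ C', IsVC G T ∧ (∅ : Set V) ⊆ T ∧ T.ncard = mvc G + 1 := by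
        rintro T ⟨y, hy, rfl⟩
        refine ⟨fun u v hadj => ?_, Set.empty_subset _, ?_⟩
        · rcases hSvc hadj with h | h
          · exact Or.inl (Set.mem_insert_of_mem _ h)
          · exact Or.inr (Set.mem_insert_of_mem _ h)
        · rw [Set.ncard_insert_of_notMem hy S.toFinite, hScard]
      -- building a path from the extra guard to a given vertex of S, inside T
      have hpath : ∀ (y : V), y ∉ S → ∀ (u : V), u ∈ S →
          ∃ q : G.Walk y u, q.IsPath ∧ ∀ w ∈ q.support, w ∈ insert y S := by
        intro y hy u hu
        obtain ⟨p⟩ := hconn.preconnected y u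
        cases p with
        | nil => exact absurd hu hy
        | @cons _ w _ h p' =>
          have hw : w ∈ S := by
            rcases hSvc h with h' | h'
            · exact absurd h' hy
            · exact h'
          obtain ⟨r, hr⟩ := vc_walk_in_S hconn hlc hSvc hw hu
          have hrsub : ∀ z ∈ r.toPath.1.support, z ∈ S := fun z hz =>
            hr z (r.support_toPath_subset hz)
          have hyn : y ∉ r.toPath.1.support := fun hcon => hy (hrsub y hcon)
          refine ⟨Walk.cons h r.toPath.1, (r.toPath.2).cons hyn, ?_⟩
          intro z hz
          rw [Walk.support_cons, List.mem_cons] at hz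
          rcases hz with rfl | hz
          · exact Set.mem_insert _ _
          · exact Set.mem_insert_of_mem _ (hrsub z hz)
      have hclass : IsEvcClassOn G ∅ (mvc G + 1) C' := by
        refine ⟨⟨insert x₀ S, x₀, hx₀, rfl⟩, hmem, ?_⟩
        rintro T ⟨y, hy, rfl⟩ u v hadj
        by_cases hu : u ∈ insert y S
        · by_cases hv : v ∈ insert y S
          · exact ⟨insert y S, ⟨y, hy, rfl⟩, swap_defends hu hv hadj⟩
          · -- v is unoccupied
            have huS : u ∈ S := by
              rcases hSvc hadj with h | h
              · exact h
              · exact absurd (Set.mem_insert_of_mem _ h) hv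
            obtain ⟨q, hqp, hqsup⟩ := hpath y hy u huS
            obtain ⟨f, hbij, hmove, hfu⟩ :=
              shift q.length q (insert y S) rfl hqp hqsup hv hadj
            have hvS : v ∉ S := fun h => hv (Set.mem_insert_of_mem _ h)
            have hTd : insert y S \ {y} = S := by
              rw [Set.insert_diff_self_of_notMem hy]
            refine ⟨insert v S, ⟨v, hvS, rfl⟩, f, ?_, hmove, Or.inl ⟨hu, hfu⟩⟩
            have : (insert y S \ {y}) ∪ {v} = insert v S := by
              rw [hTd]; ext z; simp [or_comm]
            rwa [this] at hbij
        · -- u is unoccupied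
          have hvS : v ∈ S := by
            rcases hSvc hadj with h | h
            · exact absurd (Set.mem_insert_of_mem _ h) hu
            · exact h
          obtain ⟨q, hqp, hqsup⟩ := hpath y hy v hvS
          obtain ⟨f, hbij, hmove, hfv⟩ :=
            shift q.length q (insert y S) rfl hqp hqsup hu hadj.symm
          have huS : u ∉ S := fun h => hu (Set.mem_insert_of_mem _ h)
          have hTd : insert y S \ {y} = S := by
            rw [Set.insert_diff_self_of_notMem hy]
          refine ⟨insert u S, ⟨u, huS, rfl⟩, f, ?_, hmove,
            Or.inr ⟨Set.mem_insert_of_mem _ hvS, hfv⟩⟩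
          have : (insert y S \ {y}) ∪ {u} = insert u S := by
            rw [hTd]; ext z; simp [or_comm]
          rwa [this] at hbij
      have hup : evc G ≤ mvc G + 1 := Nat.sInf_le ⟨C', hclass⟩
      omega
  · -- no edges at all
    left
    push_neg at hE
    have hmvc : mvc G = 0 :=
      Nat.le_zero.mp (Nat.sInf_le ⟨∅, fun u v h => absurd h (hE u v), Set.ncard_empty V⟩)
    have hevc : evc G = 0 := by
      refine Nat.le_zero.mp (Nat.sInf_le ⟨{∅}, ⟨∅, rfl⟩, ?_, ?_⟩)
      · rintro S rfl
        exact ⟨fun u v h => absurd h (hE u v), le_rfl, Set.ncard_empty V⟩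
      · rintro S rfl u v h
        exact absurd h (hE u v)
    rw [hmvc, hevc]
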